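/- On ℝ⁴ let f₁(x) = (1, x₃, x₄, 0) and define z₁(x) = 2x₂x₄ − x₃², z₂(x) = x₁x₄ − x₃, z₃(x) = x₄. Then: (a) for every x ∈ ℝ⁴ and each i ∈ {1,2,3}, Dz_i(x)(f₁(x)) = 0; and (b) for every x ∈ ℝ⁴ with x₄ ≠ 0, the three linear functionals Dz₁(x), Dz₂(x), Dz₃(x) on ℝ⁴ are linearly independent. -/

import Mathlib

/-- Control vector field `f₁(x) = (1, x₃, x₄, 0)` of Example 2. -/
noncomputable def ex2f₁ : EuclideanSpace ℝ (Fin 4) → EuclideanSpace ℝ (Fin 4) :=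
  fun x => WithLp.toLp 2 ![1, x 2, x 3, 0]

/-- First integral candidate `z₁(x) = 2 x₂ x₄ - x₃²`. -/
def ex2z₁ : EuclideanSpace ℝ (Fin 4) → ℝ := fun x => 2 * x 1 * x 3 - (x 2) ^ 2

/-- First integral candidate `z₂(x) = x₁ x₄ - x₃`. -/
def ex2z₂ : EuclideanSpace ℝ (Fin 4) → ℝ := fun x => x 0 * x 3 - x 2

/-- First integral candidate `z₃(x) = x₄`. -/
def ex2z₃ : EuclideanSpace ℝ (Fin 4) → ℝ := fun x => x 3

noncomputable def P4 (i : Fin 4) : EuclideanSpace ℝ (Fin 4) →L[ℝ] ℝ := EuclideanSpace.proj i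

lemma hz₁ (x : EuclideanSpace ℝ (Fin 4)) :
    HasFDerivAt ex2z₁ ((2 * x 3) • P4 1 + (2 * x 1) • P4 3 - (2 * x 2) • P4 2) x := by
  have h1 := (P4 1).hasFDerivAt (x := x)
  have h2 := (P4 2).hasFDerivAt (x := x)
  have h3 := (P4 3).hasFDerivAt (x := x)
  have key := ((h1.const_mul 2).mul h3).sub (h2.mul h2)
  have hfun : ex2z₁ = fun y => 2 * P4 1 y * P4 3 y - P4 2 y * P4 2 y := by
    funext y; simp [ex2z₁, P4]; ring
  rw [hfun]
  refine key.congr_fderiv ?_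
  ext v
  simp [P4]
  ring

lemma hz₂ (x : EuclideanSpace ℝ (Fin 4)) :
    HasFDerivAt ex2z₂ ((x 3) • P4 0 + (x 0) • P4 3 - P4 2) x := by
  have h0 := (P4 0).hasFDerivAt (x := x)
  have h2 := (P4 2).hasFDerivAt (x := x)
  have h3 := (P4 3).hasFDerivAt (x := x)
  have key := (h0.mul h3).sub h2
  have hfun : ex2z₂ = fun y => P4 0 y * P4 3 y - P4 2 y := by
    funext y; simp [ex2z₂, P4]
  rw [hfun]
  refine key.congr_fderiv ?_
  ext v
  simp [P4]
  ring

lemma hz₃ (x : EuclideanSpace ℝ (Fin 4)) : HasFDerivAt ex2z₃ (P4 3) x :=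
  (P4 3).hasFDerivAt (x := x)

/-- `z₁, z₂, z₃` are first integrals of `f₁` on all of `ℝ⁴`, and at every
point with `x₄ ≠ 0` their differentials are linearly independent functionals on `ℝ⁴`. -/
theorem ex2_first_integrals :
    (∀ x : EuclideanSpace ℝ (Fin 4),
      fderiv ℝ ex2z₁ x (ex2f₁ x) = 0 ∧
      fderiv ℝ ex2z₂ x (ex2f₁ x) = 0 ∧
      fderiv ℝ ex2z₃ x (ex2f₁ x) = 0) ∧
    (∀ x : EuclideanSpace ℝ (Fin 4), x 3 ≠ 0 →
      LinearIndependent ℝ ![fderiv ℝ ex2z₁ x, fderiv ℝ ex2z₂ x, fderiv ℝ ex2z₃ x]) := by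
  constructor
  · intro x
    rw [(hz₁ x).fderiv, (hz₂ x).fderiv, (hz₃ x).fderiv]
    refine ⟨?_, ?_, ?_⟩ <;> simp [P4, ex2f₁] <;> ring
  · intro x hx
    rw [(hz₁ x).fderiv, (hz₂ x).fderiv, (hz₃ x).fderiv]
    rw [Fintype.linearIndependent_iff]
    intro g hg
    have e := fun (j : Fin 4) => congrArg (fun L => L (EuclideanSpace.single j 1)) hg
    simp [Fin.sum_univ_three, P4, EuclideanSpace.single_apply] at e
    have e1 := e 1
    have e0 := e 0
    have e3 := e 3
    simp (config := { decide := true }) at e1 e0 e3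
    have hg0 : g 0 = 0 := e1.resolve_right hx
    have hg1 : g 1 = 0 := e0.resolve_right hx
    have hg2 : g 2 = 0 := by rw [hg0, hg1] at e3; linarith
    intro i
    fin_cases i <;> assumption
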